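/- Let k be a field, V a finite-dimensional k-vector space, E = ⋀V, and S = Sym(V^*). Let A = E/I be a finite-dimensional cohomologically graded quotient of E with socle degree n having the EPY property. Then the resonance varieties of A propagate: R^i(A) ⊆ R^{i+1}(A) for all 0 ≤ i < n; that is, for every a ∈ V and all integers 0 ≤ p ≤ q ≤ n, if H^p(A, a·) ≠ 0 then H^q(A, a·) ≠ 0. -/

import Mathlib

open TensorProduct

/-- Left multiplication by the degree-one element `ι a ∈ ⋀V` corresponding to `a ∈ V`,
as a `k`-linear endomorphism of the `⋀V`-module `P`. -/
noncomputable def extMul (k : Type) [Field k] (V : Type) [AddCommGroup V] [Module k V]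
    (P : Type) [AddCommGroup P] [Module k P]
    [Module (ExteriorAlgebra k V) P] [IsScalarTower k (ExteriorAlgebra k V) P]
    (a : V) : P →ₗ[k] P where
  toFun p := ExteriorAlgebra.ι k a • p
  map_add' := smul_add _
  map_smul' c p := smul_comm _ c p

/-- The differential of the linear complex `L(P) = (P_• ⊗ S, d)` of free modules over the
polynomial ring `S = k[x_j : j ∈ ι] = Sym(V^*)` (where `V` has basis `(e_j)_{j ∈ ι}` and
`(x_j)` is the dual basis), given on the graded piece `P_i ⊗ S` by
`d(p ⊗ s) = ∑_j (e_j · p) ⊗ (x_j · s)`, assembled as a single `S`-linear endomorphism of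
`S ⊗_k P`. -/
noncomputable def bggDifferential (k : Type) [Field k]
    (ι : Type) [Fintype ι] [DecidableEq ι]
    (V : Type) [AddCommGroup V] [Module k V] (b : Module.Basis ι k V)
    (P : Type) [AddCommGroup P] [Module k P]
    [Module (ExteriorAlgebra k V) P] [IsScalarTower k (ExteriorAlgebra k V) P] :
    (MvPolynomial ι k ⊗[k] P) →ₗ[MvPolynomial ι k] (MvPolynomial ι k ⊗[k] P) :=
  ∑ j : ι, TensorProduct.AlgebraTensorModule.map
    (LinearMap.lsmul (MvPolynomial ι k) (MvPolynomial ι k) (MvPolynomial.X j))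
    (extMul k V P (b j))


set_option linter.unusedSectionVars false

section aux

variable {k : Type} [Field k] {ι : Type} [Fintype ι] [DecidableEq ι]
  {V : Type} [AddCommGroup V] [Module k V] (b : Module.Basis ι k V)
  {A : Type} [AddCommGroup A] [Module k A]
  [Module (ExteriorAlgebra k V) A] [IsScalarTower k (ExteriorAlgebra k V) A]

@[simp] lemma extMul_apply (v : V) (p : A) :
    extMul k V A v p = ExteriorAlgebra.ι k v • p := rfl

/-- `1 ⊗ (a •)` as an `R`-linear endomorphism of `R ⊗ A`. -/
noncomputable def psiM (a : V) :
    (MvPolynomial ι k ⊗[k] A) →ₗ[MvPolynomial ι k] (MvPolynomial ι k ⊗[k] A) :=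
  TensorProduct.AlgebraTensorModule.map LinearMap.id (extMul k V A a)

@[simp] lemma psiM_tmul (a : V) (s : MvPolynomial ι k) (p : A) :
    psiM a (s ⊗ₜ[k] p) = s ⊗ₜ[k] (ExteriorAlgebra.ι k a • p) := by
  simp [psiM]

lemma bgg_tmul (s : MvPolynomial ι k) (p : A) :
    bggDifferential k ι V b A (s ⊗ₜ[k] p)
      = ∑ j : ι, (MvPolynomial.X j * s) ⊗ₜ[k] (ExteriorAlgebra.ι k (b j) • p) := by
  simp [bggDifferential, LinearMap.sum_apply, smul_eq_mul]

lemma ext_anticomm (x y : V) (p : A) :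
    ExteriorAlgebra.ι k x • ExteriorAlgebra.ι k y • p
      + ExteriorAlgebra.ι k y • ExteriorAlgebra.ι k x • p = 0 := by
  rw [smul_smul, smul_smul, ← add_smul, ExteriorAlgebra.ι_add_mul_swap, zero_smul]

lemma ext_sq (x : V) (p : A) :
    ExteriorAlgebra.ι k x • ExteriorAlgebra.ι k x • p = 0 := by
  rw [smul_smul, ExteriorAlgebra.ι_sq_zero, zero_smul]

end aux



section aux2

variable {k : Type} [Field k] {ι : Type} [Fintype ι] [DecidableEq ι]
  {V : Type} [AddCommGroup V] [Module k V] (b : Module.Basis ι k V)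
  {A : Type} [AddCommGroup A] [Module k A]
  [Module (ExteriorAlgebra k V) A] [IsScalarTower k (ExteriorAlgebra k V) A]

/-- the twisted differential `D = d + 1 ⊗ (a •)` -/
noncomputable def DDM (a : V) :
    (MvPolynomial ι k ⊗[k] A) →ₗ[MvPolynomial ι k] (MvPolynomial ι k ⊗[k] A) :=
  bggDifferential k ι V b A + psiM a

lemma DDM_tmul (a : V) (s : MvPolynomial ι k) (p : A) :
    DDM b a (s ⊗ₜ[k] p)
      = (∑ j : ι, (MvPolynomial.X j * s) ⊗ₜ[k] (ExteriorAlgebra.ι k (b j) • p))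
        + s ⊗ₜ[k] (ExteriorAlgebra.ι k a • p) := by
  simp [DDM, bgg_tmul]

lemma psiM_psiM (a : V) (x : MvPolynomial ι k ⊗[k] A) : psiM a (psiM a x) = 0 := by
  induction x using TensorProduct.induction_on with
  | zero => simp
  | tmul s p => simp [ext_sq]
  | add x y hx hy => simp [map_add, hx, hy]

lemma bgg_psiM (a : V) (x : MvPolynomial ι k ⊗[k] A) :
    bggDifferential k ι V b A (psiM a x) + psiM a (bggDifferential k ι V b A x) = 0 := by
  induction x using TensorProduct.induction_on with
  | zero => simp
  | tmul s p =>
      rw [psiM_tmul, bgg_tmul, bgg_tmul, map_sum]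
      simp only [psiM_tmul]
      rw [← Finset.sum_add_distrib]
      refine Finset.sum_eq_zero fun j _ => ?_
      rw [← TensorProduct.tmul_add, ext_anticomm, TensorProduct.tmul_zero]
  | add x y hx hy =>
      rw [map_add, map_add, map_add, map_add]
      rw [show ∀ (a1 a2 b1 b2 : MvPolynomial ι k ⊗[k] A),
        a1 + a2 + (b1 + b2) = (a1 + b1) + (a2 + b2) from fun _ _ _ _ => by abel]
      rw [hx, hy, add_zero]

lemma bgg_bgg (x : MvPolynomial ι k ⊗[k] A) :
    bggDifferential k ι V b A (bggDifferential k ι V b A x) = 0 := by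
  induction x using TensorProduct.induction_on with
  | zero => simp
  | tmul s p =>
      rw [bgg_tmul, map_sum]
      have : ∀ j : ι, bggDifferential k ι V b A
          ((MvPolynomial.X j * s) ⊗ₜ[k] (ExteriorAlgebra.ι k (b j) • p))
          = ∑ i : ι, (MvPolynomial.X i * (MvPolynomial.X j * s)) ⊗ₜ[k]
              (ExteriorAlgebra.ι k (b i) • ExteriorAlgebra.ι k (b j) • p) := by
        intro j; rw [bgg_tmul]
      simp only [this]
      rw [← Finset.sum_product']
      refine Finset.sum_involution (fun x _ => Prod.swap x) ?_ ?_ (fun _ _ => Finset.mem_univ _) ?_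
      · rintro ⟨i, j⟩ -
        simp only [Prod.swap]
        rw [show MvPolynomial.X (R := k) j * (MvPolynomial.X i * s)
            = MvPolynomial.X i * (MvPolynomial.X j * s) by ring,
          ← TensorProduct.tmul_add, ext_anticomm, TensorProduct.tmul_zero]
      · rintro ⟨i, j⟩ - h
        simp only [ne_eq, Prod.ext_iff, Prod.swap] at h ⊢
        intro hji
        apply h
        rw [hji.1, ext_sq, TensorProduct.tmul_zero]
      · rintro ⟨i, j⟩ -
        rfl
  | add x y hx hy => rw [map_add, map_add, hx, hy, add_zero]

lemma DDM_DDM (a : V) (x : MvPolynomial ι k ⊗[k] A) : DDM b a (DDM b a x) = 0 := by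
  simp only [DDM, LinearMap.add_apply, map_add]
  rw [bgg_bgg, psiM_psiM]
  have h := bgg_psiM b a x
  rw [show ∀ (u v : MvPolynomial ι k ⊗[k] A), 0 + u + (v + 0) = u + v from
    fun _ _ => by abel, add_comm, h]

end aux2


section aux3

variable {k : Type} [Field k] {ι : Type} [Fintype ι] [DecidableEq ι]
  {V : Type} [AddCommGroup V] [Module k V] (b : Module.Basis ι k V)
  {A : Type} [AddCommGroup A] [Module k A]
  [Module (ExteriorAlgebra k V) A] [IsScalarTower k (ExteriorAlgebra k V) A]

/-- the augmentation ideal of `MvPolynomial ι k` -/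
noncomputable def Jaug (k ι : Type) [Field k] : Ideal (MvPolynomial ι k) :=
  RingHom.ker (MvPolynomial.aeval (fun _ : ι => (0:k)) : MvPolynomial ι k →ₐ[k] k)

lemma X_mem_Jaug (j : ι) : MvPolynomial.X j ∈ Jaug k ι := by
  simp [Jaug, RingHom.mem_ker]

lemma baseChange_le {W : Submodule k A}
    {N : Submodule (MvPolynomial ι k) (MvPolynomial ι k ⊗[k] A)}
    (h : ∀ w ∈ W, (1 : MvPolynomial ι k) ⊗ₜ[k] w ∈ N) :
    W.baseChange (MvPolynomial ι k) ≤ N := by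
  rw [Submodule.baseChange_eq_span]
  refine Submodule.span_le.mpr ?_
  rintro - ⟨w, hw, rfl⟩
  exact h w hw

lemma smul_map_mem {f : (MvPolynomial ι k ⊗[k] A) →ₗ[MvPolynomial ι k] (MvPolynomial ι k ⊗[k] A)}
    {N N' : Submodule (MvPolynomial ι k) (MvPolynomial ι k ⊗[k] A)}
    (h : ∀ y ∈ N, f y ∈ N') (I : Ideal (MvPolynomial ι k)) {x} (hx : x ∈ I • N) :
    f x ∈ I • N' :=
  Submodule.smul_induction_on hx
    (fun r hr n hn => by rw [map_smul]; exact Submodule.smul_mem_smul hr (h n hn))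
    (fun u v hu hv => by rw [map_add]; exact add_mem hu hv)

lemma bgg_mem_smul_baseChange {W W' : Submodule k A}
    (hW : ∀ j : ι, ∀ w ∈ W, ExteriorAlgebra.ι k (b j) • w ∈ W') :
    ∀ x ∈ W.baseChange (MvPolynomial ι k),
      bggDifferential k ι V b A x ∈ Jaug k ι • W'.baseChange (MvPolynomial ι k) := by
  intro x hx
  have : W.baseChange (MvPolynomial ι k)
      ≤ Submodule.comap (bggDifferential k ι V b A)
          (Jaug k ι • W'.baseChange (MvPolynomial ι k)) := by
    refine baseChange_le fun w hw => ?_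
    simp only [Submodule.mem_comap, bgg_tmul, mul_one]
    refine Submodule.sum_mem _ fun j _ => ?_
    have hX : (MvPolynomial.X j : MvPolynomial ι k) ⊗ₜ[k] (ExteriorAlgebra.ι k (b j) • w)
        = (MvPolynomial.X j : MvPolynomial ι k) • ((1 : MvPolynomial ι k) ⊗ₜ[k] (ExteriorAlgebra.ι k (b j) • w)) := by
      rw [TensorProduct.smul_tmul', smul_eq_mul, mul_one]
    rw [hX]
    exact Submodule.smul_mem_smul (X_mem_Jaug j)
      (Submodule.tmul_mem_baseChange_of_mem _ (hW j w hw))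
  exact this hx

lemma psiM_mem_baseChange {a : V} {W W' : Submodule k A}
    (hW : ∀ w ∈ W, ExteriorAlgebra.ι k a • w ∈ W') :
    ∀ x ∈ W.baseChange (MvPolynomial ι k),
      psiM a x ∈ W'.baseChange (MvPolynomial ι k) := by
  intro x hx
  have : W.baseChange (MvPolynomial ι k)
      ≤ Submodule.comap (psiM a) (W'.baseChange (MvPolynomial ι k)) := by
    refine baseChange_le fun w hw => ?_
    simp only [Submodule.mem_comap, psiM_tmul]
    exact Submodule.tmul_mem_baseChange_of_mem _ (hW w hw)
  exact this hx

lemma baseChange_sup {W W' : Submodule k A} :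
    (W ⊔ W').baseChange (MvPolynomial ι k)
      = W.baseChange (MvPolynomial ι k) ⊔ W'.baseChange (MvPolynomial ι k) := by
  refine le_antisymm ?_ ?_
  · refine baseChange_le fun w hw => ?_
    obtain ⟨u, hu, v, hv, rfl⟩ := Submodule.mem_sup.mp hw
    rw [TensorProduct.tmul_add]
    exact Submodule.add_mem _
      (Submodule.mem_sup_left (Submodule.tmul_mem_baseChange_of_mem _ hu))
      (Submodule.mem_sup_right (Submodule.tmul_mem_baseChange_of_mem _ hv))
  · refine sup_le (baseChange_le fun w hw => ?_) (baseChange_le fun w hw => ?_)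
    · exact Submodule.tmul_mem_baseChange_of_mem _ (Submodule.mem_sup_left hw)
    · exact Submodule.tmul_mem_baseChange_of_mem _ (Submodule.mem_sup_right hw)

lemma baseChange_mono' {W W' : Submodule k A} (h : W ≤ W') :
    W.baseChange (MvPolynomial ι k) ≤ W'.baseChange (MvPolynomial ι k) :=
  baseChange_le fun w hw => Submodule.tmul_mem_baseChange_of_mem _ (h hw)

/-- evaluation at the origin -/
noncomputable def evM (k ι : Type) [Field k] (A : Type) [AddCommGroup A] [Module k A] :
    (MvPolynomial ι k ⊗[k] A) →ₗ[k] A :=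
  TensorProduct.lift ((LinearMap.lsmul k A).comp
    (MvPolynomial.aeval (fun _ : ι => (0:k))).toLinearMap)

@[simp] lemma evM_tmul (s : MvPolynomial ι k) (p : A) :
    evM k ι A (s ⊗ₜ[k] p) = MvPolynomial.aeval (fun _ : ι => (0:k)) s • p := by
  simp [evM]

lemma evM_smul (r : MvPolynomial ι k) (x : MvPolynomial ι k ⊗[k] A) :
    evM k ι A (r • x) = MvPolynomial.aeval (fun _ : ι => (0:k)) r • evM k ι A x := by
  induction x using TensorProduct.induction_on with
  | zero => simp
  | tmul s p => rw [TensorProduct.smul_tmul', smul_eq_mul, evM_tmul, evM_tmul, map_mul, mul_smul]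
  | add x y hx hy => rw [smul_add, map_add, hx, hy, map_add, smul_add]

lemma evM_eq_zero {N : Submodule (MvPolynomial ι k) (MvPolynomial ι k ⊗[k] A)}
    {x : MvPolynomial ι k ⊗[k] A} (hx : x ∈ Jaug k ι • N) : evM k ι A x = 0 :=
  Submodule.smul_induction_on hx
    (fun r hr n _ => by
      rw [evM_smul]
      rw [Jaug, RingHom.mem_ker] at hr
      rw [hr, zero_smul])
    (fun u v hu hv => by rw [map_add, hu, hv, add_zero])

lemma evM_baseChange {W : Submodule k A} {x : MvPolynomial ι k ⊗[k] A}
    (hx : x ∈ W.baseChange (MvPolynomial ι k)) : evM k ι A x ∈ W := by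
  rw [Submodule.baseChange_eq_span] at hx
  refine Submodule.span_induction ?_ ?_ ?_ ?_ hx
  · rintro - ⟨w, hw, rfl⟩
    simpa using hw
  · simp
  · intro u v _ _ hu hv
    rw [map_add]; exact W.add_mem hu hv
  · intro r u _ hu
    rw [evM_smul]; exact W.smul_mem _ hu

lemma evM_DDM (a : V) (x : MvPolynomial ι k ⊗[k] A) :
    evM k ι A (DDM b a x) = ExteriorAlgebra.ι k a • evM k ι A x := by
  induction x using TensorProduct.induction_on with
  | zero => simp
  | tmul s p =>
      rw [DDM_tmul, map_add, map_sum, evM_tmul]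
      have : ∀ j : ι, evM k ι A ((MvPolynomial.X j * s) ⊗ₜ[k] (ExteriorAlgebra.ι k (b j) • p))
          = 0 := by
        intro j
        rw [evM_tmul, map_mul]
        simp
      rw [Finset.sum_eq_zero fun j _ => this j, zero_add, evM_tmul, smul_comm]
  | add x y hx hy => rw [map_add, map_add, hx, hy, map_add, smul_add]

end aux3


section aux4

variable {k : Type} [Field k] {ι : Type} [Fintype ι] [DecidableEq ι]
  {V : Type} [AddCommGroup V] [Module k V] (b : Module.Basis ι k V)
  {A : Type} [AddCommGroup A] [Module k A]
  [Module (ExteriorAlgebra k V) A] [IsScalarTower k (ExteriorAlgebra k V) A]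

/-- translation of the polynomial ring -/
noncomputable def tauP (k : Type) [Field k] {ι : Type} (c : ι → k) :
    MvPolynomial ι k →ₐ[k] MvPolynomial ι k :=
  MvPolynomial.aeval (fun j => MvPolynomial.X j + MvPolynomial.C (c j))

@[simp] lemma tauP_X (c : ι → k) (j : ι) :
    tauP k c (MvPolynomial.X j) = MvPolynomial.X j + MvPolynomial.C (c j) := by
  simp [tauP]

lemma tauP_tauP (c d : ι → k) (s : MvPolynomial ι k) :
    tauP k c (tauP k d s) = tauP k (fun j => c j + d j) s := by
  have : (tauP k c).comp (tauP k d) = tauP k (fun j => c j + d j) := by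
    apply MvPolynomial.algHom_ext
    intro j
    simp only [tauP, AlgHom.comp_apply, MvPolynomial.aeval_X, map_add, MvPolynomial.aeval_C,
      MvPolynomial.algebraMap_eq]
    ring
  exact DFunLike.congr_fun this s

lemma tauP_zero (s : MvPolynomial ι k) : tauP k (fun _ : ι => (0:k)) s = s := by
  have : tauP k (fun _ : ι => (0:k)) = AlgHom.id k (MvPolynomial ι k) := by
    apply MvPolynomial.algHom_ext
    intro j
    simp [tauP]
  rw [this]; rfl

/-- translation of `R ⊗ A` -/
noncomputable def PhiP (c : ι → k) (A : Type) [AddCommGroup A] [Module k A] :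
    (MvPolynomial ι k ⊗[k] A) →ₗ[k] (MvPolynomial ι k ⊗[k] A) :=
  LinearMap.rTensor A (tauP k c).toLinearMap

@[simp] lemma PhiP_tmul (c : ι → k) (s : MvPolynomial ι k) (p : A) :
    PhiP c A (s ⊗ₜ[k] p) = (tauP k c s) ⊗ₜ[k] p := rfl

lemma PhiP_PhiP (c d : ι → k) (x : MvPolynomial ι k ⊗[k] A) :
    PhiP c A (PhiP d A x) = PhiP (fun j => c j + d j) A x := by
  induction x using TensorProduct.induction_on with
  | zero => simp
  | tmul s p => rw [PhiP_tmul, PhiP_tmul, PhiP_tmul, tauP_tauP]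
  | add x y hx hy => rw [map_add, map_add, map_add, hx, hy]

lemma PhiP_zero_app (x : MvPolynomial ι k ⊗[k] A) : PhiP (fun _ : ι => (0:k)) A x = x := by
  induction x using TensorProduct.induction_on with
  | zero => simp
  | tmul s p => rw [PhiP_tmul, tauP_zero]
  | add x y hx hy => rw [map_add, hx, hy]

lemma PhiP_neg_cancel (c : ι → k) (x : MvPolynomial ι k ⊗[k] A) :
    PhiP c A (PhiP (fun j => - c j) A x) = x := by
  rw [PhiP_PhiP]
  simpa using PhiP_zero_app x

lemma PhiP_neg_cancel' (c : ι → k) (x : MvPolynomial ι k ⊗[k] A) :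
    PhiP (fun j => - c j) A (PhiP c A x) = x := by
  rw [PhiP_PhiP]
  simpa using PhiP_zero_app x

lemma PhiP_smul (c : ι → k) (r : MvPolynomial ι k) (x : MvPolynomial ι k ⊗[k] A) :
    PhiP c A (r • x) = tauP k c r • PhiP c A x := by
  induction x using TensorProduct.induction_on with
  | zero => simp
  | tmul s p =>
      rw [TensorProduct.smul_tmul', smul_eq_mul, PhiP_tmul, map_mul, PhiP_tmul,
        TensorProduct.smul_tmul', smul_eq_mul]
  | add x y hx hy => rw [smul_add, map_add, hx, hy, map_add, smul_add]

lemma PhiP_baseChange (c : ι → k) {W : Submodule k A} {x : MvPolynomial ι k ⊗[k] A}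
    (hx : x ∈ W.baseChange (MvPolynomial ι k)) :
    PhiP c A x ∈ W.baseChange (MvPolynomial ι k) := by
  rw [Submodule.baseChange_eq_span] at hx
  refine Submodule.span_induction ?_ ?_ ?_ ?_ hx
  · rintro - ⟨w, hw, rfl⟩
    simpa using Submodule.tmul_mem_baseChange_of_mem _ hw
  · simp
  · intro u v _ _ hu hv
    rw [map_add]; exact Submodule.add_mem _ hu hv
  · intro r u _ hu
    rw [PhiP_smul]
    exact Submodule.smul_mem _ _ hu

lemma sum_repr_smul (a : V) (p : A) :
    ∑ j : ι, b.repr a j • (ExteriorAlgebra.ι k (b j) • p) = ExteriorAlgebra.ι k a • p := by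
  have h1 : ∀ j : ι, b.repr a j • (ExteriorAlgebra.ι k (b j) • p)
      = (b.repr a j • ExteriorAlgebra.ι k (b j)) • p := fun j => (smul_assoc _ _ _).symm
  simp only [h1]
  rw [← Finset.sum_smul]
  congr 1
  rw [show ∑ j : ι, b.repr a j • ExteriorAlgebra.ι k (b j)
      = ExteriorAlgebra.ι k (∑ j : ι, b.repr a j • b j) by simp only [map_sum, map_smul],
    b.sum_repr a]

lemma DDM_PhiP (a : V) (x : MvPolynomial ι k ⊗[k] A) :
    DDM b a (PhiP (fun j => b.repr a j) A x)
      = PhiP (fun j => b.repr a j) A (bggDifferential k ι V b A x) := by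
  set c : ι → k := fun j => b.repr a j with hc
  induction x using TensorProduct.induction_on with
  | zero => simp
  | tmul s p =>
      rw [PhiP_tmul, DDM_tmul, bgg_tmul, map_sum]
      have key : ∀ j : ι, PhiP c A ((MvPolynomial.X j * s) ⊗ₜ[k] (ExteriorAlgebra.ι k (b j) • p))
          = (MvPolynomial.X j * tauP k c s) ⊗ₜ[k] (ExteriorAlgebra.ι k (b j) • p)
            + c j • ((tauP k c s) ⊗ₜ[k] (ExteriorAlgebra.ι k (b j) • p)) := by
        intro j
        rw [PhiP_tmul, map_mul, tauP_X, add_mul, TensorProduct.add_tmul, MvPolynomial.C_mul',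
          TensorProduct.smul_tmul']
      simp only [key]
      rw [Finset.sum_add_distrib]
      congr 1
      have h2 : ∀ j : ι, c j • ((tauP k c s) ⊗ₜ[k] (ExteriorAlgebra.ι k (b j) • p))
          = (tauP k c s) ⊗ₜ[k] (c j • (ExteriorAlgebra.ι k (b j) • p)) := fun j =>
        (TensorProduct.tmul_smul (c j) (tauP k c s) (ExteriorAlgebra.ι k (b j) • p)).symm
      simp only [h2]
      rw [← TensorProduct.tmul_sum, sum_repr_smul]
  | add x y hx hy => rw [map_add, map_add, map_add, hx, hy, map_add]

lemma bgg_PhiP_neg (a : V) (x : MvPolynomial ι k ⊗[k] A) :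
    bggDifferential k ι V b A (PhiP (fun j => - b.repr a j) A x)
      = PhiP (fun j => - b.repr a j) A (DDM b a x) := by
  have h := DDM_PhiP b a (PhiP (fun j => - b.repr a j) A x)
  rw [PhiP_neg_cancel] at h
  have h2 := congrArg (PhiP (fun j => - b.repr a j) A) h
  rw [PhiP_neg_cancel'] at h2
  exact h2.symm

end aux4


section aux5

variable {k : Type} [Field k] {ι : Type} [Fintype ι] [DecidableEq ι]
  {V : Type} [AddCommGroup V] [Module k V] (b : Module.Basis ι k V)
  {A : Type} [AddCommGroup A] [Module k A]
  [Module (ExteriorAlgebra k V) A] [IsScalarTower k (ExteriorAlgebra k V) A]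

lemma epyD {n : ℕ} {Agr : ℤ → Submodule k A}
    (hEPY : ∀ i : ℤ, i ≠ -(n : ℤ) →
      Submodule.baseChange (MvPolynomial ι k) (Agr i) ⊓
          LinearMap.ker (bggDifferential k ι V b A) ≤
        Submodule.map (bggDifferential k ι V b A)
          (Submodule.baseChange (MvPolynomial ι k) (Agr (i + 1))))
    (a : V) (i : ℤ) (hi : i ≠ -(n : ℤ)) {x : MvPolynomial ι k ⊗[k] A}
    (hx : x ∈ (Agr i).baseChange (MvPolynomial ι k)) (hx0 : DDM b a x = 0) :
    ∃ u ∈ (Agr (i + 1)).baseChange (MvPolynomial ι k), DDM b a u = x := by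
  set c : ι → k := fun j => b.repr a j with hcdef
  set y := PhiP (fun j => - c j) A x with hy
  have hy1 : y ∈ (Agr i).baseChange (MvPolynomial ι k) := PhiP_baseChange _ hx
  have hy0 : bggDifferential k ι V b A y = 0 := by
    rw [hy, bgg_PhiP_neg, hx0, map_zero]
  obtain ⟨u', hu', huy⟩ := hEPY i hi (Submodule.mem_inf.mpr ⟨hy1, LinearMap.mem_ker.mpr hy0⟩)
  refine ⟨PhiP c A u', PhiP_baseChange _ hu', ?_⟩
  rw [DDM_PhiP, huy, hy, PhiP_neg_cancel]

lemma exists_compl_inside {K U : Submodule k A} (h : K ≤ U) :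
    ∃ G : Submodule k A, G ≤ U ∧ K ⊔ G = U ∧ G ⊓ K = ⊥ := by
  obtain ⟨W, hW⟩ := Submodule.exists_isCompl K
  refine ⟨W ⊓ U, inf_le_right, ?_, ?_⟩
  · rw [← sup_inf_assoc_of_le W h, hW.sup_eq_top, top_inf_eq]
  · have h1 : (W ⊓ U) ⊓ K ≤ W ⊓ K := inf_le_inf_right _ inf_le_left
    rw [inf_comm W K, hW.inf_eq_bot] at h1
    exact le_bot_iff.mp h1

lemma inj_step {a : V} {G : Submodule k A}
    (hGK : G ⊓ LinearMap.ker (extMul k V A a) = ⊥)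
    (I : Ideal (MvPolynomial ι k)) {x : MvPolynomial ι k ⊗[k] A}
    (hx : x ∈ G.baseChange (MvPolynomial ι k))
    (hpsix : psiM a x ∈ I • (⊤ : Submodule (MvPolynomial ι k) (MvPolynomial ι k ⊗[k] A))) :
    x ∈ I • G.baseChange (MvPolynomial ι k) := by
  set β : G →ₗ[k] A := (extMul k V A a) ∘ₗ G.subtype with hβ
  have hker : LinearMap.ker β = ⊥ := by
    rw [LinearMap.ker_eq_bot']
    intro g hg
    have hmem : (g : A) ∈ G ⊓ LinearMap.ker (extMul k V A a) := by
      refine ⟨g.2, ?_⟩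
      simpa [hβ] using hg
    rw [hGK] at hmem
    exact Subtype.ext (by simpa using hmem)
  obtain ⟨lam, hlam⟩ := β.exists_leftInverse_of_injective hker
  set Lam : (MvPolynomial ι k ⊗[k] A) →ₗ[MvPolynomial ι k] (MvPolynomial ι k ⊗[k] A) :=
    TensorProduct.AlgebraTensorModule.map
      (LinearMap.id : MvPolynomial ι k →ₗ[MvPolynomial ι k] MvPolynomial ι k)
      (G.subtype ∘ₗ lam) with hLam
  have h1 : ∀ y ∈ G.baseChange (MvPolynomial ι k), Lam (psiM a y) = y := by
    intro y hy
    rw [Submodule.baseChange_eq_span] at hy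
    refine Submodule.span_induction ?_ ?_ ?_ ?_ hy
    · rintro - ⟨w, hw, rfl⟩
      simp only [TensorProduct.mk_apply, psiM_tmul, hLam,
        TensorProduct.AlgebraTensorModule.map_tmul, LinearMap.id_coe, id_eq,
        LinearMap.comp_apply]
      have hw' : ExteriorAlgebra.ι k a • w = β ⟨w, hw⟩ := rfl
      rw [hw', show lam (β ⟨w, hw⟩) = ⟨w, hw⟩ from DFunLike.congr_fun hlam ⟨w, hw⟩]
      rfl
    · simp
    · intro u v _ _ hu hv
      rw [map_add, map_add, hu, hv]
    · intro r u _ hu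
      rw [map_smul, map_smul, hu]
  have h2 : ∀ y, Lam y ∈ G.baseChange (MvPolynomial ι k) := by
    intro y
    induction y using TensorProduct.induction_on with
    | zero => simp
    | tmul s p =>
        simp only [hLam, TensorProduct.AlgebraTensorModule.map_tmul, LinearMap.id_coe, id_eq,
          LinearMap.comp_apply]
        exact Submodule.tmul_mem_baseChange_of_mem _ (Submodule.coe_mem (lam p))
    | add u v hu hv => rw [map_add]; exact Submodule.add_mem _ hu hv
  have h3 : Lam (psiM a x) ∈ I • G.baseChange (MvPolynomial ι k) :=
    smul_map_mem (fun y _ => h2 y) I hpsix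
  rwa [h1 x hx] at h3

lemma key_step {a : V} {U U' : Submodule k A}
    (HK : U ⊓ LinearMap.ker (extMul k V A a) ≤ Submodule.map (extMul k V A a) U')
    (m : ℕ) {E : MvPolynomial ι k ⊗[k] A}
    (hE : E ∈ Jaug k ι ^ m • U.baseChange (MvPolynomial ι k))
    (hpsiE : psiM a E ∈ Jaug k ι ^ (m+1) • (⊤ : Submodule (MvPolynomial ι k) (MvPolynomial ι k ⊗[k] A))) :
    ∃ v ∈ Jaug k ι ^ m • U'.baseChange (MvPolynomial ι k),
      E - psiM a v ∈ Jaug k ι ^ (m+1) • U.baseChange (MvPolynomial ι k) := by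
  set K := U ⊓ LinearMap.ker (extMul k V A a) with hKdef
  obtain ⟨G, hGU, hKG, hGK⟩ := exists_compl_inside (inf_le_left : K ≤ U)
  have hUsplit : U.baseChange (MvPolynomial ι k)
      = K.baseChange (MvPolynomial ι k) ⊔ G.baseChange (MvPolynomial ι k) := by
    rw [← baseChange_sup, hKG]
  rw [hUsplit, Submodule.smul_sup] at hE
  obtain ⟨E₁, hE₁, E₂, hE₂, hEsum⟩ := Submodule.mem_sup.mp hE
  have hpsiK : ∀ y ∈ K.baseChange (MvPolynomial ι k), psiM a y ∈
      (⊥ : Submodule (MvPolynomial ι k) (MvPolynomial ι k ⊗[k] A)) := by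
    intro y hy
    have h0 := psiM_mem_baseChange (a := a) (W := K) (W' := (⊥ : Submodule k A))
      (fun w hw => by
        have : extMul k V A a w = 0 := hw.2
        simpa using this) y hy
    simpa using h0
  have hpsiE1 : psiM a E₁ = 0 := by
    have h0 : psiM a E₁ ∈ Jaug k ι ^ m • (⊥ : Submodule (MvPolynomial ι k) (MvPolynomial ι k ⊗[k] A)) :=
      smul_map_mem hpsiK _ hE₁
    rw [Submodule.smul_bot] at h0
    simpa using h0
  have hpsiE2 : psiM a E₂ ∈ Jaug k ι ^ (m+1) • (⊤ : Submodule (MvPolynomial ι k) (MvPolynomial ι k ⊗[k] A)) := by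
    rw [← hEsum] at hpsiE
    rw [map_add, hpsiE1, zero_add] at hpsiE
    exact hpsiE
  have hGker : G ⊓ LinearMap.ker (extMul k V A a) = ⊥ := by
    refine le_antisymm ?_ bot_le
    intro x hxm
    have : x ∈ G ⊓ K := ⟨hxm.1, ⟨hGU hxm.1, hxm.2⟩⟩
    rw [hGK] at this
    exact this
  have hE₂G : E₂ ∈ G.baseChange (MvPolynomial ι k) := Submodule.smul_le_right hE₂
  have hE2' : E₂ ∈ Jaug k ι ^ (m+1) • G.baseChange (MvPolynomial ι k) :=
    inj_step hGker _ hE₂G hpsiE2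
  have hKmap : K.baseChange (MvPolynomial ι k)
      ≤ Submodule.map (psiM a) (U'.baseChange (MvPolynomial ι k)) := by
    refine baseChange_le fun w hw => ?_
    obtain ⟨u, hu, hau⟩ := HK hw
    refine ⟨(1 : MvPolynomial ι k) ⊗ₜ[k] u, Submodule.tmul_mem_baseChange_of_mem _ hu, ?_⟩
    rw [psiM_tmul]
    rw [show ExteriorAlgebra.ι k a • u = extMul k V A a u from rfl, hau]
  have hE1m : E₁ ∈ Submodule.map (psiM a) (Jaug k ι ^ m • U'.baseChange (MvPolynomial ι k)) := by
    rw [Submodule.map_smul'']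
    exact Submodule.smul_mono le_rfl hKmap hE₁
  obtain ⟨v, hv, hveq⟩ := hE1m
  refine ⟨v, hv, ?_⟩
  rw [show E - psiM a v = E₂ by rw [← hEsum, ← hveq]; abel]
  exact Submodule.smul_mono le_rfl (baseChange_mono' hGU) hE2'

lemma approx {a : V} {U U' : Submodule k A} {z : A}
    (hz : z ∈ U') (hz0 : ExteriorAlgebra.ι k a • z = 0)
    (hstr : ∀ j : ι, ∀ w ∈ U', ExteriorAlgebra.ι k (b j) • w ∈ U)
    (HK : U ⊓ LinearMap.ker (extMul k V A a) ≤ Submodule.map (extMul k V A a) U')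
    (m : ℕ) :
    ∃ W : MvPolynomial ι k ⊗[k] A,
      W ∈ U'.baseChange (MvPolynomial ι k) ∧
      W - (1:MvPolynomial ι k) ⊗ₜ[k] z ∈ Jaug k ι • U'.baseChange (MvPolynomial ι k) ∧
      DDM b a W ∈ Jaug k ι ^ (m+1) • U.baseChange (MvPolynomial ι k) := by
  induction m with
  | zero =>
      refine ⟨(1:MvPolynomial ι k) ⊗ₜ[k] z, Submodule.tmul_mem_baseChange_of_mem _ hz,
        by simpa using Submodule.zero_mem _, ?_⟩
      have hDz : DDM b a ((1:MvPolynomial ι k) ⊗ₜ[k] z)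
          = bggDifferential k ι V b A ((1:MvPolynomial ι k) ⊗ₜ[k] z) := by
        rw [DDM, LinearMap.add_apply, psiM_tmul, hz0, TensorProduct.tmul_zero, add_zero]
      rw [hDz, pow_one]
      exact bgg_mem_smul_baseChange b hstr _ (Submodule.tmul_mem_baseChange_of_mem _ hz)
  | succ m ih =>
      obtain ⟨W, hW1, hW2, hW3⟩ := ih
      set E := DDM b a W with hEdef
      have hE0 : DDM b a E = 0 := DDM_DDM b a W
      have hbU : ∀ y ∈ U.baseChange (MvPolynomial ι k),
          bggDifferential k ι V b A y ∈ Jaug k ι • (⊤ : Submodule k A).baseChange (MvPolynomial ι k) :=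
        bgg_mem_smul_baseChange b (fun _ w _ => trivial)
      have hdE : bggDifferential k ι V b A E
          ∈ Jaug k ι ^ (m+2) • (⊤ : Submodule (MvPolynomial ι k) (MvPolynomial ι k ⊗[k] A)) := by
        have h0 : bggDifferential k ι V b A E
            ∈ Jaug k ι ^ (m+1) • (Jaug k ι • (⊤ : Submodule k A).baseChange (MvPolynomial ι k)) :=
          smul_map_mem hbU _ hW3
        rw [Submodule.baseChange_top] at h0
        rw [show m + 2 = (m+1) + 1 from rfl, pow_succ, Submodule.mul_smul]
        exact h0
      have hpsiE : psiM a E ∈ Jaug k ι ^ (m+2) •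
          (⊤ : Submodule (MvPolynomial ι k) (MvPolynomial ι k ⊗[k] A)) := by
        have hsplit : psiM a E = - bggDifferential k ι V b A E := by
          have h0 : bggDifferential k ι V b A E + psiM a E = 0 := by
            rw [← LinearMap.add_apply, ← DDM, hE0]
          exact eq_neg_of_add_eq_zero_right h0
        rw [hsplit]
        exact Submodule.neg_mem _ hdE
      obtain ⟨v, hv, hEv⟩ := key_step HK (m+1) hW3 hpsiE
      refine ⟨W - v, Submodule.sub_mem _ hW1 (Submodule.smul_le_right hv), ?_, ?_⟩
      · have hvJ : v ∈ Jaug k ι • U'.baseChange (MvPolynomial ι k) :=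
          Submodule.smul_mono (Ideal.pow_le_self (Nat.succ_ne_zero m)) le_rfl hv
        have := Submodule.sub_mem _ hW2 hvJ
        rwa [show W - (1:MvPolynomial ι k) ⊗ₜ[k] z - v = W - v - (1:MvPolynomial ι k) ⊗ₜ[k] z by abel] at this
      · have hDv : DDM b a v = bggDifferential k ι V b A v + psiM a v := by
          rw [DDM, LinearMap.add_apply]
        have hbgv : bggDifferential k ι V b A v ∈ Jaug k ι ^ (m+2) • U.baseChange (MvPolynomial ι k) := by
          have h0 : bggDifferential k ι V b A v
              ∈ Jaug k ι ^ (m+1) • (Jaug k ι • U.baseChange (MvPolynomial ι k)) :=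
            smul_map_mem (bgg_mem_smul_baseChange b hstr) _ hv
          rw [show m + 2 = (m+1) + 1 from rfl, pow_succ, Submodule.mul_smul]
          exact h0
        have : DDM b a (W - v) = (E - psiM a v) - bggDifferential k ι V b A v := by
          rw [map_sub, hDv, hEdef]; abel
        rw [this]
        exact Submodule.sub_mem _ hEv hbgv

end aux5


section aux6

variable {k : Type} [Field k] {ι : Type} [Fintype ι] [DecidableEq ι]
  {V : Type} [AddCommGroup V] [Module k V] (b : Module.Basis ι k V)
  {A : Type} [AddCommGroup A] [Module k A]
  [Module (ExteriorAlgebra k V) A] [IsScalarTower k (ExteriorAlgebra k V) A]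
  [FiniteDimensional k A]

lemma step_lemma {n : ℕ} {Agr : ℤ → Submodule k A}
    (hdeg : ∀ (a : V) (i : ℤ), Submodule.map (extMul k V A a) (Agr i) ≤ Agr (i - 1))
    (hEPY : ∀ i : ℤ, i ≠ -(n : ℤ) →
      Submodule.baseChange (MvPolynomial ι k) (Agr i) ⊓
          LinearMap.ker (bggDifferential k ι V b A) ≤
        Submodule.map (bggDifferential k ι V b A)
          (Submodule.baseChange (MvPolynomial ι k) (Agr (i + 1))))
    (a : V) (c : ℤ) (hc : 1 - c ≠ -(n : ℤ))
    (Hc : Agr (-c) ⊓ LinearMap.ker (extMul k V A a)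
        ≤ Submodule.map (extMul k V A a) (Agr (1 - c))) :
    Agr (1 - c) ⊓ LinearMap.ker (extMul k V A a)
      ≤ Submodule.map (extMul k V A a) (Agr (2 - c)) := by
  intro z hzmem
  obtain ⟨hz1, hz2⟩ := hzmem
  have hz0 : ExteriorAlgebra.ι k a • z = 0 := hz2
  have hstr : ∀ j : ι, ∀ w ∈ Agr (1 - c), ExteriorAlgebra.ι k (b j) • w ∈ Agr (-c) := by
    intro j w hw
    have h0 := hdeg (b j) (1 - c) ⟨w, hw, rfl⟩
    rwa [show (1 : ℤ) - c - 1 = -c by ring] at h0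
  obtain ⟨k₀, hAR⟩ := Ideal.exists_pow_inf_eq_pow_smul (Jaug k ι)
    (Submodule.map (DDM b a) ((Agr (1 - c)).baseChange (MvPolynomial ι k)))
  obtain ⟨W, hW1, hW2, hW3⟩ := approx b hz1 hz0 hstr Hc k₀
  have hDW : DDM b a W ∈ Jaug k ι ^ (k₀+1) •
        (⊤ : Submodule (MvPolynomial ι k) (MvPolynomial ι k ⊗[k] A))
      ⊓ Submodule.map (DDM b a) ((Agr (1 - c)).baseChange (MvPolynomial ι k)) :=
    ⟨Submodule.smul_mono le_rfl le_top hW3, ⟨W, hW1, rfl⟩⟩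
  rw [hAR (k₀+1) (Nat.le_succ k₀)] at hDW
  have hpow : Jaug k ι ^ (k₀ + 1 - k₀) = Jaug k ι := by
    rw [show k₀ + 1 - k₀ = 1 by omega, pow_one]
  rw [hpow] at hDW
  have hDW2 : DDM b a W ∈ Submodule.map (DDM b a)
      (Jaug k ι • (Agr (1 - c)).baseChange (MvPolynomial ι k)) := by
    rw [Submodule.map_smul'']
    exact Submodule.smul_mono le_rfl inf_le_right hDW
  obtain ⟨Vv, hVv, hVveq⟩ := hDW2
  have hW''0 : DDM b a (W - Vv) = 0 := by rw [map_sub, hVveq, sub_self]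
  have hW''bc : W - Vv ∈ (Agr (1 - c)).baseChange (MvPolynomial ι k) :=
    Submodule.sub_mem _ hW1 (Submodule.smul_le_right hVv)
  obtain ⟨u, hu, hueq⟩ := epyD b hEPY a (1 - c) hc hW''bc hW''0
  have hzeq : evM k ι A (W - Vv) = z := by
    have hmem : (W - Vv) - (1:MvPolynomial ι k) ⊗ₜ[k] z
        ∈ Jaug k ι • (Agr (1 - c)).baseChange (MvPolynomial ι k) := by
      have h0 := Submodule.sub_mem _ hW2 hVv
      rwa [show W - (1:MvPolynomial ι k) ⊗ₜ[k] z - Vv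
        = (W - Vv) - (1:MvPolynomial ι k) ⊗ₜ[k] z by abel] at h0
    have h1 : evM k ι A ((W - Vv) - (1:MvPolynomial ι k) ⊗ₜ[k] z) = 0 := evM_eq_zero hmem
    rw [map_sub] at h1
    have h2 : evM k ι A ((1:MvPolynomial ι k) ⊗ₜ[k] z) = z := by
      rw [evM_tmul, map_one, one_smul]
    rw [h2] at h1
    exact sub_eq_zero.mp h1
  have hfin : z = ExteriorAlgebra.ι k a • evM k ι A u := by
    rw [← hzeq, ← hueq, evM_DDM]
  have humem : evM k ι A u ∈ Agr (2 - c) := by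
    have := evM_baseChange hu
    rwa [show (1 : ℤ) - c + 1 = 2 - c by ring] at this
  exact ⟨evM k ι A u, humem, hfin.symm⟩

end aux6


set_option maxHeartbeats 1000000 in
/-- **Statement 12.** Let `A = E/I` be a finite-dimensional cyclic graded module over the
exterior algebra `E = ⋀V` (graded cohomologically, so the internal homological grading
`Agr : ℤ → Submodule k A` has `A^c = Agr (-c)`, with `V` acting in degree `-1` and the
cyclic generator in degree `0`), with socle degree `n`, having the EPY property
(`H_i(L(A(-n))) = 0` for `i ≠ 0`, i.e. vanishing of `H_j(L(A))` for `j ≠ -n` in the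
unshifted grading).  Then the resonance varieties of `A` propagate: for every `a ∈ V` and
all `0 ≤ p ≤ q ≤ n`, if `H^p(A, a·) ≠ 0` then `H^q(A, a·) ≠ 0`, where `H^c(A, a·) ≠ 0` is
expressed as the failure of the inclusion `A^c ∩ ker(a·) ⊆ a · A^{c-1}`, that is,
`Agr (-c) ∩ ker(a·) ⊆ a · Agr (1 - c)`. -/
theorem stmt12 (k : Type) [Field k] (ι : Type) [Fintype ι] [DecidableEq ι]
    (V : Type) [AddCommGroup V] [Module k V] (b : Module.Basis ι k V)
    (A : Type) [AddCommGroup A] [Module k A]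
    [Module (ExteriorAlgebra k V) A] [IsScalarTower k (ExteriorAlgebra k V) A]
    [FiniteDimensional k A]
    (Agr : ℤ → Submodule k A)
    (hgrading : DirectSum.IsInternal Agr)
    (hdeg : ∀ (a : V) (i : ℤ), Submodule.map (extMul k V A a) (Agr i) ≤ Agr (i - 1))
    (hcyclic : ∃ v : A, v ∈ Agr 0 ∧ Submodule.span (ExteriorAlgebra k V) {v} = ⊤)
    (hhigh : ∀ i : ℤ, 0 < i → Agr i = ⊥)
    (n : ℕ)
    (hsocle : Agr (-(n : ℤ)) ≠ ⊥)
    (hbot : ∀ i : ℤ, i < -(n : ℤ) → Agr i = ⊥)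
    (hEPY : ∀ i : ℤ, i ≠ -(n : ℤ) →
      Submodule.baseChange (MvPolynomial ι k) (Agr i) ⊓
          LinearMap.ker (bggDifferential k ι V b A) ≤
        Submodule.map (bggDifferential k ι V b A)
          (Submodule.baseChange (MvPolynomial ι k) (Agr (i + 1))))
    (a : V) (p q : ℕ) (hpq : p ≤ q) (hqn : q ≤ n)
    (hp : ¬ (Agr (-(p : ℤ)) ⊓ LinearMap.ker (extMul k V A a) ≤
        Submodule.map (extMul k V A a) (Agr (1 - (p : ℤ))))) :
    ¬ (Agr (-(q : ℤ)) ⊓ LinearMap.ker (extMul k V A a) ≤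
        Submodule.map (extMul k V A a) (Agr (1 - (q : ℤ)))) := by
  intro hq
  apply hp
  have H : ∀ t : ℕ, ∀ c : ℤ, c + t = (q : ℤ) → 0 ≤ c →
      Agr (-c) ⊓ LinearMap.ker (extMul k V A a)
        ≤ Submodule.map (extMul k V A a) (Agr (1 - c)) := by
    intro t
    induction t with
    | zero =>
        intro c hc _
        have : c = (q : ℤ) := by push_cast at hc; omega
        rw [this]
        exact hq
    | succ t ih =>
        intro c hc hc0
        have h1 : (c + 1) + (t : ℤ) = (q : ℤ) := by push_cast at hc ⊢; omega
        have h2 := ih (c + 1) (by push_cast; omega) (by omega)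
        have hcn : (1 : ℤ) - (c + 1) ≠ -(n : ℤ) := by
          have : c + 1 ≤ (q : ℤ) := by omega
          have hqn' : (q : ℤ) ≤ (n : ℤ) := by exact_mod_cast hqn
          omega
        have h3 := step_lemma b hdeg hEPY a (c + 1) hcn h2
        rw [show (1 : ℤ) - (c + 1) = -c by ring, show (2 : ℤ) - (c + 1) = 1 - c by ring] at h3
        exact h3
  have hfin := H (q - p) (p : ℤ) (by push_cast [Nat.cast_sub hpq]; ring) (by positivity)
  exact hfin
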